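/- Let L be a Lie algebra over the real field ℝ admitting a basis e₁, e₂, e₃, e₄ whose brackets satisfy ⁅e₃,e₁⁆ = e₁, ⁅e₃,e₂⁆ = e₂, ⁅e₄,e₁⁆ = −e₂, ⁅e₄,e₂⁆ = e₁, and ⁅e₁,e₂⁆ = ⁅e₃,e₄⁆ = 0 (this is the solvable Lie algebra s₄,₁₂). Then the commuting graph Γ(L) is disconnected. -/

import Mathlib

/-- The commuting graph of a Lie algebra `L` over `F`: vertices are the elements of
`L` outside the center, and two distinct vertices are adjacent iff they commute. -/
def commutingGraph (F : Type*) [CommRing F] (L : Type*) [LieRing L] [LieAlgebra F L] :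
    SimpleGraph {x : L // x ∉ LieAlgebra.center F L} where
  Adj x y := x ≠ y ∧ ⁅(x : L), (y : L)⁆ = 0
  symm := ⟨fun x y h => ⟨h.1.symm, by rw [← lie_skew, h.2, neg_zero]⟩⟩
  loopless := ⟨fun x h => h.1 rfl⟩

/-- for the real solvable Lie algebra `s₄,₁₂`, given by a basis
`e₁, e₂, e₃, e₄` with `⁅e₃,e₁⁆ = e₁`, `⁅e₃,e₂⁆ = e₂`, `⁅e₄,e₁⁆ = -e₂`, `⁅e₄,e₂⁆ = e₁` and
all other brackets of basis vectors zero, the commuting graph is disconnected. -/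
theorem stmt19 (L : Type*) [LieRing L] [LieAlgebra ℝ L]
    (b : Module.Basis (Fin 4) ℝ L)
    (h31 : ⁅b 2, b 0⁆ = b 0) (h32 : ⁅b 2, b 1⁆ = b 1)
    (h41 : ⁅b 3, b 0⁆ = -b 1) (h42 : ⁅b 3, b 1⁆ = b 0)
    (h12 : ⁅b 0, b 1⁆ = 0) (h34 : ⁅b 2, b 3⁆ = 0) :
    ¬ (commutingGraph ℝ L).Connected := by
  -- derived brackets
  have h21 : ⁅b 1, b 0⁆ = 0 := by rw [← lie_skew, h12, neg_zero]
  have h13 : ⁅b 0, b 2⁆ = -b 0 := by rw [← lie_skew, h31]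
  have h23 : ⁅b 1, b 2⁆ = -b 1 := by rw [← lie_skew, h32]
  have h14 : ⁅b 0, b 3⁆ = b 1 := by rw [← lie_skew, h41, neg_neg]
  have h24 : ⁅b 1, b 3⁆ = -b 0 := by rw [← lie_skew, h42]
  have h43 : ⁅b 3, b 2⁆ = 0 := by rw [← lie_skew, h34, neg_zero]
  set R : L → Fin 4 → ℝ := fun x i => b.repr x i with hR
  -- bracket formula
  have brk : ∀ x y : L, ⁅x, y⁆ =
      (R x 2 * R y 0 + R x 3 * R y 1 - R x 0 * R y 2 - R x 1 * R y 3) • b 0 +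
      (R x 2 * R y 1 - R x 3 * R y 0 - R x 1 * R y 2 + R x 0 * R y 3) • b 1 := by
    intro x y
    have hx := b.sum_repr x
    have hy := b.sum_repr y
    rw [Fin.sum_univ_four] at hx hy
    conv_lhs => rw [← hx, ← hy]
    simp only [add_lie, lie_add, smul_lie, lie_smul,
      h31, h32, h41, h42, h12, h34, h21, h13, h23, h14, h24, h43, lie_self,
      smul_zero, smul_neg, smul_smul]
    simp only [hR]
    module
  -- key commuting consequence
  have key : ∀ x y : L, x ≠ 0 → ⁅x, y⁆ = 0 → R x 2 = 0 → R x 3 = 0 →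
      R y 2 = 0 ∧ R y 3 = 0 := by
    intro x y hx0 hxy hx2 hx3
    have hb := brk x y
    rw [hxy, hx2, hx3] at hb
    have hc := congrArg (fun z => b.repr z) hb.symm
    simp only [map_add, map_smul, b.repr_self, map_zero] at hc
    have hc1 := DFunLike.congr_fun hc 0
    have hc2 := DFunLike.congr_fun hc 1
    simp [Finsupp.single_apply] at hc1 hc2
    have hx01 : R x 0 ≠ 0 ∨ R x 1 ≠ 0 := by
      by_contra hcon
      push_neg at hcon
      apply hx0
      have hx := b.sum_repr x
      rw [Fin.sum_univ_four] at hx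
      rw [← hx]
      simp only [hR] at *
      rw [hcon.1, hcon.2, hx2, hx3]
      simp
    have hpos : R x 0 ^ 2 + R x 1 ^ 2 > 0 := by
      rcases hx01 with h | h <;> positivity
    have e2 : (R x 0 ^ 2 + R x 1 ^ 2) * R y 2 = 0 := by
      linear_combination (-(R x 0)) * hc1 + (-(R x 1)) * hc2
    have e3 : (R x 0 ^ 2 + R x 1 ^ 2) * R y 3 = 0 := by
      linear_combination (-(R x 1)) * hc1 + (R x 0) * hc2
    constructor
    · rcases mul_eq_zero.mp e2 with h | h
      · exact absurd h hpos.ne'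
      · exact h
    · rcases mul_eq_zero.mp e3 with h | h
      · exact absurd h hpos.ne'
      · exact h
  -- vertices
  have hb0ne : (b 0 : L) ≠ 0 := b.ne_zero 0
  have hmem : ∀ z : L, z ∈ LieAlgebra.center ℝ L ↔ ∀ x : L, ⁅x, z⁆ = 0 :=
    fun z => LieModule.mem_maxTrivSubmodule ℝ L L z
  have hv0 : (b 0 : L) ∉ LieAlgebra.center ℝ L := by
    intro h
    have := (hmem _).1 h (b 2)
    rw [h31] at this
    exact hb0ne this
  have hv2 : (b 2 : L) ∉ LieAlgebra.center ℝ L := by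
    intro h
    have := (hmem _).1 h (b 0)
    rw [h13] at this
    exact hb0ne (neg_eq_zero.mp this)
  have hzero : (0 : L) ∈ LieAlgebra.center ℝ L := (LieAlgebra.center ℝ L).zero_mem
  intro hconn
  set G := commutingGraph ℝ L with hG
  set P : {x : L // x ∉ LieAlgebra.center ℝ L} → Prop :=
    fun v => R v.1 2 = 0 ∧ R v.1 3 = 0 with hP
  have adjP : ∀ u v, G.Adj u v → (P u ↔ P v) := by
    intro u v huv
    obtain ⟨hne, hcomm⟩ := huv
    have hu0 : (u : L) ≠ 0 := fun h => u.2 (h ▸ hzero)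
    have hv0' : (v : L) ≠ 0 := fun h => v.2 (h ▸ hzero)
    constructor
    · rintro ⟨h2, h3⟩
      exact key u v hu0 hcomm h2 h3
    · rintro ⟨h2, h3⟩
      have : ⁅(v : L), (u : L)⁆ = 0 := by rw [← lie_skew, hcomm, neg_zero]
      exact key v u hv0' this h2 h3
  have reachP : ∀ u v, G.Reachable u v → (P u ↔ P v) := by
    intro u v ⟨w⟩
    induction w with
    | nil => rfl
    | cons h p ih => exact (adjP _ _ h).trans ih
  have hr := hconn.preconnected ⟨b 0, hv0⟩ ⟨b 2, hv2⟩
  have := (reachP _ _ hr).1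
  simp only [hP, hR] at this
  have h02 : (b.repr (b 0)) 2 = 0 := by simp [b.repr_self, Finsupp.single_apply]
  have h03 : (b.repr (b 0)) 3 = 0 := by simp [b.repr_self, Finsupp.single_apply]
  have h22 : (b.repr (b 2)) 2 = 1 := by simp [b.repr_self]
  exact one_ne_zero (h22 ▸ (this ⟨h02, h03⟩).1)
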